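/- Let (X, d, m) be a metric measure space, 1 ≤ p < ∞, and let f : X → ℝ be Hölder continuous of order 1/p: |f(x) − f(y)| ≤ M d(x,y)^{1/p} for all x, y ∈ X. Suppose also f ∈ L^p(X,m). Then with T_t f(x) = (1/m(B(x,t))) ∫_{B(x,t)} f dm, one has ‖T_t f − f‖_{L^∞(X,m)} ≤ M t^{1/p} for all t > 0, and consequently ‖f‖_{L^p(X,m)}^p = lim_{λ→∞} λ^p (m × 𝓛)({(x,t) : |T_t f(x)| > λ t^{1/p}}). -/

import Mathlib

open MeasureTheory Filter Set
open scoped ENNReal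

noncomputable section

/-- For `f` Hölder continuous of order `1/p` in `L^p` over a metric measure space, the ball
averages `T_t f` satisfy `‖T_t f − f‖_∞ ≤ M t^(1/p)` and consequently
`‖f‖_p^p = lim_{λ→∞} λ^p (m × 𝓛)({(x,t) : |T_t f x| > λ t^(1/p)})`. -/
theorem holder_ball_averages_limit
    {X : Type*} [MetricSpace X] [MeasurableSpace X] [BorelSpace X]
    (m : Measure X) [SigmaFinite m]
    (hball : ∀ (x : X) (r : ℝ), 0 < r → 0 < m (Metric.ball x r) ∧ m (Metric.ball x r) < ∞)
    (p : ℝ) (hp : 1 ≤ p)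
    (f : X → ℝ) (hfmeas : Measurable f)
    (M : ℝ) (hM : 0 < M)
    (hHolder : ∀ x y : X, |f x - f y| ≤ M * dist x y ^ (1 / p))
    (hf : MemLp f (ENNReal.ofReal p) m) :
    (∀ t > (0 : ℝ),
        essSup (fun x => ENNReal.ofReal |(⨍ y in Metric.ball x t, f y ∂m) - f x|) m
          ≤ ENNReal.ofReal (M * t ^ (1 / p))) ∧
    Tendsto (fun l : ℝ => ENNReal.ofReal (l ^ p) *
        (m.prod (volume.restrict (Set.Ioi (0 : ℝ))))
          {q : X × ℝ | 0 < q.2 ∧ l * q.2 ^ (1 / p) < |⨍ y in Metric.ball q.1 q.2, f y ∂m|})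
      atTop (nhds (∫⁻ x, ENNReal.ofReal (|f x| ^ p) ∂m)) := by
  have hp0 : (0 : ℝ) < p := lt_of_lt_of_le one_pos hp
  have hip : (0 : ℝ) < 1 / p := by positivity
  -- pointwise bound on |T_t f x - f x|
  have key : ∀ (x : X) (t : ℝ), 0 < t →
      |(⨍ y in Metric.ball x t, f y ∂m) - f x| ≤ M * t ^ (1 / p) := by
    intro x t ht
    set B := Metric.ball x t with hB
    obtain ⟨hB0, hBt⟩ := hball x t ht
    haveI : Fact (m B < ∞) := ⟨hBt⟩
    have hBr : 0 < (m B).toReal := ENNReal.toReal_pos hB0.ne' hBt.ne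
    have hfi : IntegrableOn f B m :=
      (hf.restrict B).integrable (ENNReal.one_le_ofReal.mpr hp)
    have hconst : IntegrableOn (fun _ => f x) B m :=
      integrableOn_const hBt.ne
    have heq : (⨍ y in B, f y ∂m) - f x
        = (m B).toReal⁻¹ * ∫ y in B, (f y - f x) ∂m := by
      rw [setAverage_eq, integral_sub hfi hconst, setIntegral_const, smul_eq_mul,
        smul_eq_mul, mul_sub]
      simp only [measureReal_def]
      field_simp
    have hbound : ∀ y ∈ B, ‖f y - f x‖ ≤ M * t ^ (1 / p) := by
      intro y hy
      have h1 : |f y - f x| ≤ M * dist y x ^ (1 / p) := hHolder y x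
      have h2 : dist y x ^ (1 / p) ≤ t ^ (1 / p) :=
        Real.rpow_le_rpow dist_nonneg (le_of_lt (Metric.mem_ball.mp hy)) hip.le
      calc ‖f y - f x‖ = |f y - f x| := rfl
        _ ≤ M * dist y x ^ (1 / p) := h1
        _ ≤ M * t ^ (1 / p) := by nlinarith
    have hnorm : ‖∫ y in B, (f y - f x) ∂m‖ ≤ (M * t ^ (1 / p)) * (m B).toReal :=
      norm_setIntegral_le_of_norm_le_const hBt hbound
    rw [heq, abs_mul, abs_inv, abs_of_nonneg ENNReal.toReal_nonneg]
    calc (m B).toReal⁻¹ * |∫ y in B, (f y - f x) ∂m|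
        ≤ (m B).toReal⁻¹ * ((M * t ^ (1 / p)) * (m B).toReal) := by
          exact mul_le_mul_of_nonneg_left hnorm (by positivity)
      _ = M * t ^ (1 / p) := by field_simp
  constructor
  · -- first part: essSup bound
    intro t ht
    refine essSup_le_of_ae_le _ (Eventually.of_forall fun x => ?_)
    exact ENNReal.ofReal_le_ofReal (key x t ht)
  -- second part
  set ν := volume.restrict (Set.Ioi (0 : ℝ)) with hν
  set I := ∫⁻ x, ENNReal.ofReal (|f x| ^ p) ∂m with hI
  -- the slices of the comparison sets
  have hslice : ∀ c : ℝ, 0 < c → ∀ x : X, ∀ t : ℝ,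
      (0 < t ∧ c * t ^ (1 / p) < |f x|) ↔ t ∈ Set.Ioo 0 ((|f x| / c) ^ p) := by
    intro c hc x t
    simp only [Set.mem_Ioo]
    constructor
    · rintro ⟨ht, hlt⟩
      refine ⟨ht, ?_⟩
      have h1 : t ^ (1 / p) < |f x| / c := (lt_div_iff₀' hc).mpr hlt
      have h2 : t = (t ^ (1 / p)) ^ p := by
        rw [← Real.rpow_mul ht.le, one_div_mul_cancel hp0.ne', Real.rpow_one]
      rw [h2]
      exact Real.rpow_lt_rpow (Real.rpow_nonneg ht.le _) h1 hp0
    · rintro ⟨ht, hlt⟩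
      refine ⟨ht, ?_⟩
      have hd : 0 < |f x| / c := by
        by_contra hcon
        push_neg at hcon
        have : |f x| / c = 0 := le_antisymm hcon (by positivity)
        rw [this, Real.zero_rpow hp0.ne'] at hlt
        linarith
      have h1 : t ^ (1 / p) < ((|f x| / c) ^ p) ^ (1 / p) :=
        Real.rpow_lt_rpow ht.le hlt hip
      have h2 : ((|f x| / c) ^ p) ^ (1 / p) = |f x| / c := by
        rw [← Real.rpow_mul hd.le, mul_one_div_cancel hp0.ne', Real.rpow_one]
      rw [h2] at h1
      calc c * t ^ (1 / p) < c * (|f x| / c) := by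
            exact mul_lt_mul_of_pos_left h1 hc
        _ = |f x| := by field_simp
  have hmeasS : ∀ c : ℝ,
      MeasurableSet {q : X × ℝ | 0 < q.2 ∧ c * q.2 ^ (1 / p) < |f q.1|} := by
    intro c
    have h1 : MeasurableSet {q : X × ℝ | 0 < q.2} :=
      measurableSet_lt measurable_const measurable_snd
    have h2 : MeasurableSet {q : X × ℝ | c * q.2 ^ (1 / p) < |f q.1|} :=
      measurableSet_lt ((measurable_snd.pow measurable_const).const_mul c)
        ((hfmeas.comp measurable_fst).abs)
    exact h1.inter h2
  have hcompute : ∀ c : ℝ, 0 < c →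
      (m.prod ν) {q : X × ℝ | 0 < q.2 ∧ c * q.2 ^ (1 / p) < |f q.1|}
        = ∫⁻ x, ENNReal.ofReal ((|f x| / c) ^ p) ∂m := by
    intro c hc
    rw [Measure.prod_apply (hmeasS c)]
    refine lintegral_congr fun x => ?_
    have hpre : Prod.mk x ⁻¹' {q : X × ℝ | 0 < q.2 ∧ c * q.2 ^ (1 / p) < |f q.1|}
        = Set.Ioo 0 ((|f x| / c) ^ p) := by
      ext t
      simpa using hslice c hc x t
    rw [hpre, hν, Measure.restrict_apply measurableSet_Ioo,
      Set.inter_eq_left.mpr (Set.Ioo_subset_Ioi_self), Real.volume_Ioo, sub_zero]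
  have hscale : ∀ c l : ℝ, 0 < c → 0 < l →
      ENNReal.ofReal (l ^ p) *
        (m.prod ν) {q : X × ℝ | 0 < q.2 ∧ c * q.2 ^ (1 / p) < |f q.1|}
        = ENNReal.ofReal ((l / c) ^ p) * I := by
    intro c l hc hl
    rw [hcompute c hc, hI, ← lintegral_const_mul' _ _ ENNReal.ofReal_ne_top,
      ← lintegral_const_mul' _ _ ENNReal.ofReal_ne_top]
    refine lintegral_congr fun x => ?_
    rw [← ENNReal.ofReal_mul (by positivity), ← ENNReal.ofReal_mul (by positivity)]
    congr 1
    rw [← Real.mul_rpow hl.le (by positivity), ← Real.mul_rpow (by positivity) (abs_nonneg _)]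
    congr 1
    field_simp
  -- limits of the bounding functions
  have hlim : ∀ c : ℝ,
      Tendsto (fun l : ℝ => ENNReal.ofReal ((l / (l + c)) ^ p) * I) atTop (nhds I) := by
    intro c
    have h1 : Tendsto (fun l : ℝ => l + c) atTop atTop :=
      tendsto_atTop_add_const_right _ c tendsto_id
    have h0 : Tendsto (fun l : ℝ => c / (l + c)) atTop (nhds 0) :=
      tendsto_const_nhds.div_atTop h1
    have haux : Tendsto (fun l : ℝ => l / (l + c)) atTop (nhds 1) := by
      have h2 : Tendsto (fun l : ℝ => 1 - c / (l + c)) atTop (nhds 1) := by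
        simpa using tendsto_const_nhds.sub h0
      refine h2.congr' ?_
      filter_upwards [eventually_gt_atTop (|c|)] with l hl
      have hlc : 0 < l + c := by linarith [neg_abs_le c]
      field_simp
      ring
    have h2 : Tendsto (fun l : ℝ => (l / (l + c)) ^ p) atTop (nhds 1) := by
      have := haux.rpow_const (p := p) (Or.inl one_ne_zero)
      simpa using this
    have h3 : Tendsto (fun l : ℝ => ENNReal.ofReal ((l / (l + c)) ^ p)) atTop (nhds 1) := by
      have := (ENNReal.continuous_ofReal.tendsto 1).comp h2
      simpa [Function.comp_def] using this
    simpa using ENNReal.Tendsto.mul_const h3 (Or.inl one_ne_zero)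
  -- squeeze
  refine tendsto_of_tendsto_of_tendsto_of_le_of_le' (hlim M) (hlim (-M)) ?_ ?_
  · -- lower bound eventually
    filter_upwards [eventually_gt_atTop M] with l hl
    have hl0 : 0 < l := hM.trans hl
    rw [← hscale (l + M) l (by linarith) hl0]
    refine mul_le_mul_right (measure_mono ?_) _
    rintro ⟨x, t⟩ ⟨ht, hlt⟩
    simp only [Set.mem_setOf_eq] at *
    refine ⟨ht, ?_⟩
    have h1 := key x t ht
    have h2 : |f x| - |⨍ y in Metric.ball x t, f y ∂m| ≤
        |(⨍ y in Metric.ball x t, f y ∂m) - f x| := by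
      have := abs_sub_abs_le_abs_sub (f x) (⨍ y in Metric.ball x t, f y ∂m)
      rwa [abs_sub_comm] at this
    nlinarith [Real.rpow_nonneg ht.le (1 / p)]
  · -- upper bound eventually
    filter_upwards [eventually_gt_atTop M] with l hl
    have hl0 : 0 < l := hM.trans hl
    rw [show l + -M = l - M from by ring, ← hscale (l - M) l (by linarith) hl0]
    refine mul_le_mul_right (measure_mono ?_) _
    rintro ⟨x, t⟩ ⟨ht, hlt⟩
    simp only [Set.mem_setOf_eq] at *
    refine ⟨ht, ?_⟩
    have h1 := key x t ht
    have h2 : |⨍ y in Metric.ball x t, f y ∂m| - |f x| ≤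
        |(⨍ y in Metric.ball x t, f y ∂m) - f x| :=
      abs_sub_abs_le_abs_sub _ _
    nlinarith [Real.rpow_nonneg ht.le (1 / p)]
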